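/- arXiv:2003.01154 — 2 statements merged into one kernel-verified Lean document; each statement's English description precedes it below -/
import Mathlib

section
/- Let G=(V,E) be a finite simple graph, let P_1,…,P_ℓ be a partition of V, and let α > 0 be such that for every i and every S ⊆ P_i with |S| ≤ |P_i|/2 one has |∂_{G[P_i]}(S)| ≥ α|S|. If U ⊆ V is sparse (the vertex set of every connected component of G[U] satisfies |γ ∩ P_i| ≤ |P_i|/2 for all i), then for every i ∈ [ℓ]: |∂_{G[P_i]}(U ∩ P_i)| ≥ α·|U ∩ P_i|. -/
open Classical

noncomputable section

namespace Paper

variable {V : Type*}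

/-- The degree of a vertex. -/
def deg (G : SimpleGraph V) (v : V) : ℕ := (G.neighborSet v).ncard

/-- The volume of a vertex set: the sum of the degrees of its vertices. -/
def vol (G : SimpleGraph V) (S : Set V) : ℕ := ∑ᶠ v ∈ S, deg G v

/-- The edge boundary ∂(S): edges of `G` with exactly one endpoint in `S`. -/
def bdry (G : SimpleGraph V) (S : Set V) : Set (Sym2 V) :=
  {e | e ∈ G.edgeSet ∧ (∃ u ∈ e, u ∈ S) ∧ (∃ v ∈ e, v ∉ S)}

/-- The closure ∇(S): edges of `G` with at least one endpoint in `S`. -/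
def cl (G : SimpleGraph V) (S : Set V) : Set (Sym2 V) :=
  {e | e ∈ G.edgeSet ∧ ∃ u ∈ e, u ∈ S}

/-- The conductance φ_G(S) = |∂(S)| / vol_G(S). -/
def cond (G : SimpleGraph V) (S : Set V) : ℝ :=
  ((bdry G S).ncard : ℝ) / (vol G S : ℝ)

/-- The conductance φ(G) of the graph: the minimum of φ_G(S) over nonempty S
with vol_G(S) ≤ vol_G(V)/2. -/
def graphCond [Fintype V] (G : SimpleGraph V) : ℝ :=
  sInf {x : ℝ | ∃ S : Set V, S.Nonempty ∧ 2 * vol G S ≤ vol G Set.univ ∧ x = cond G S}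

/-- The induced subgraph G[P], realised as a graph on the same vertex set
(vertices outside `P` are isolated). -/
def restrict (G : SimpleGraph V) (P : Set V) : SimpleGraph V where
  Adj u v := G.Adj u v ∧ u ∈ P ∧ v ∈ P
  symm := ⟨fun _ _ h => ⟨h.1.symm, h.2.2, h.2.1⟩⟩
  loopless := ⟨fun u h => G.irrefl h.1⟩

/-- e(S,T): the number of edges of `G` with one endpoint in `S` and the other in `T \ S`. -/
def eCount (G : SimpleGraph V) (S T : Set V) : ℕ :=
  ({e | e ∈ G.edgeSet ∧ ∃ u v, e = s(u, v) ∧ u ∈ S ∧ v ∈ T \ S}).ncard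

/-- φ(S,B) = e(S,B) / ((vol(B∖S)/vol(B)) · e(S, V∖B)). -/
def condPair (G : SimpleGraph V) (S B : Set V) : ℝ :=
  (eCount G S B : ℝ) /
    (((vol G (B \ S) : ℝ) / (vol G B : ℝ)) * (eCount G S (Set.univ \ B) : ℝ))

/-- An edge is monochromatic under a colouring if all its endpoints get the same colour. -/
def Mono {q : ℕ} (χ : V → Fin q) (e : Sym2 V) : Prop :=
  ∀ u ∈ e, ∀ v ∈ e, χ u = χ v

/-- The number of edges in `F` that are monochromatic under `χ`. -/
def monoCount {q : ℕ} (χ : V → Fin q) (F : Set (Sym2 V)) : ℕ :=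
  {e ∈ F | Mono χ e}.ncard

/-- m_G(χ): the number of monochromatic edges of `G` under `χ`. -/
def mG {q : ℕ} (G : SimpleGraph V) (χ : V → Fin q) : ℕ := monoCount χ G.edgeSet

/-- The q-colour Potts model partition function. -/
def Z [Fintype V] [DecidableEq V] (G : SimpleGraph V) (q : ℕ) (β : ℝ) : ℝ :=
  ∑ ω : V → Fin q, Real.exp (β * (mG G ω : ℝ))

/-- P_1, …, P_ℓ form a partition of the vertex set. -/
def IsPartition {ℓ : ℕ} (P : Fin ℓ → Set V) : Prop :=
  (∀ i j : Fin ℓ, i ≠ j → Disjoint (P i) (P j)) ∧ (⋃ i, P i) = Set.univ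

/-- A set is small (w.r.t. the partition P) if |S ∩ P i| ≤ |P i|/2 for all i. -/
def Small {ℓ : ℕ} (P : Fin ℓ → Set V) (S : Set V) : Prop :=
  ∀ i, ((S ∩ P i).ncard : ℝ) ≤ ((P i).ncard : ℝ) / 2

/-- A set U is sparse if the vertex set of every connected component of G[U] is small. -/
def Sparse {ℓ : ℕ} (G : SimpleGraph V) (P : Fin ℓ → Set V) (U : Set V) : Prop :=
  ∀ u ∈ U, Small P {v | (restrict G U).Reachable u v}

/-- Every `S ⊆ P i` with `|S| ≤ |P i|/2` satisfies `|∂_{G[P i]}(S)| ≥ α |S|`. -/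
def PartExpansion {ℓ : ℕ} (G : SimpleGraph V) (P : Fin ℓ → Set V) (α : ℝ) : Prop :=
  ∀ i, ∀ S ⊆ P i, (S.ncard : ℝ) ≤ ((P i).ncard : ℝ) / 2 →
    α * (S.ncard : ℝ) ≤ ((bdry (restrict G (P i)) S).ncard : ℝ)

/-- A ground state: a colouring constant on each part of the partition. -/
def GroundState {q ℓ : ℕ} (P : Fin ℓ → Set V) (ψ : V → Fin q) : Prop :=
  ∀ i : Fin ℓ, ∀ u ∈ P i, ∀ v ∈ P i, ψ u = ψ v

/-- A state ω is close to a ground state ψ if on each part, more than half of the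
vertices agree with ψ. -/
def CloseTo {q ℓ : ℕ} (P : Fin ℓ → Set V) (ω ψ : V → Fin q) : Prop :=
  ∀ i : Fin ℓ, ((P i).ncard : ℝ) / 2 < ((P i ∩ {v | ω v = ψ v}).ncard : ℝ)

/-- Z*: the contribution to Z from states close to some ground state. -/
def Zstar [Fintype V] [DecidableEq V] {ℓ : ℕ} (G : SimpleGraph V) (P : Fin ℓ → Set V)
    (q : ℕ) (β : ℝ) : ℝ :=
  ∑ ω : V → Fin q,
    if ∃ ψ : V → Fin q, GroundState P ψ ∧ CloseTo P ω ψ then Real.exp (β * (mG G ω : ℝ)) else 0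

/-- The colouring of V that colours γ by `lam` and everything else by `ψ`. -/
def combine {q : ℕ} (γ : Set V) (ψ : V → Fin q) (lam : γ → Fin q) : V → Fin q :=
  fun v => if h : v ∈ γ then lam ⟨v, h⟩ else ψ v

/-- m_G(ψ, γ, λ): the number of edges of ∇(γ) that are monochromatic when γ is
coloured by λ and all other vertices by ψ. -/
def mRes {q : ℕ} (G : SimpleGraph V) (γ : Set V) (ψ : V → Fin q) (lam : γ → Fin q) : ℕ :=
  monoCount (combine γ ψ lam) (cl G γ)

/-- A polymer: a nonempty small set inducing a connected subgraph. -/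
def Polymer {ℓ : ℕ} (G : SimpleGraph V) (P : Fin ℓ → Set V) (γ : Set V) : Prop :=
  γ.Nonempty ∧ (G.induce γ).Connected ∧ Small P γ

/-- Two polymers are compatible if they are disjoint with disjoint edge boundaries. -/
def Compatible (G : SimpleGraph V) (γ γ' : Set V) : Prop :=
  Disjoint γ γ' ∧ Disjoint (bdry G γ) (bdry G γ')

/-- The family of vertex sets of connected components of G[U]. -/
def components (G : SimpleGraph V) (U : Set V) : Set (Set V) :=
  {C | ∃ u ∈ U, C = {v | (restrict G U).Reachable u v}}

lemma restrict_mono (G : SimpleGraph V) {A B : Set V} (h : A ⊆ B) :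
    restrict G A ≤ restrict G B := fun {_ _} hadj => ⟨hadj.1, h hadj.2.1, h hadj.2.2⟩

lemma key [Fintype V] (G : SimpleGraph V) {ℓ : ℕ} (P : Fin ℓ → Set V)
    (α : ℝ) (hα : 0 < α) (hexp : PartExpansion G P α)
    (U : Set V) (hU : Sparse G P U) (i : Fin ℓ) :
    ∀ n (W : Set V), W.ncard = n → W ⊆ U → W ⊆ P i →
      α * (W.ncard : ℝ) ≤ ((bdry (restrict G (P i)) W).ncard : ℝ) := by
  intro n
  induction n using Nat.strong_induction_on with
  | _ n ih =>
    intro W hn hWU hWP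
    rcases W.eq_empty_or_nonempty with rfl | ⟨u₀, hu₀⟩
    · simp
    set GP := restrict G (P i) with hGP
    set H := restrict G W with hH
    set C : Set V := {v | v ∈ W ∧ H.Reachable u₀ v} with hC
    have hCW : C ⊆ W := fun v hv => hv.1
    have hu₀C : u₀ ∈ C := ⟨hu₀, SimpleGraph.Reachable.refl u₀⟩
    have hclosed : ∀ x ∈ C, ∀ y ∈ W, GP.Adj x y → y ∈ C := by
      intro x hx y hyW hadj
      exact ⟨hyW, hx.2.trans (SimpleGraph.Adj.reachable ⟨hadj.1, hx.1, hyW⟩)⟩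
    -- C is small
    have hCsmall : (C.ncard : ℝ) ≤ ((P i).ncard : ℝ) / 2 := by
      have hsub : C ⊆ {v | (restrict G U).Reachable u₀ v} ∩ P i := by
        intro v hv
        exact ⟨(hv.2.mono (restrict_mono G hWU)), hWP hv.1⟩
      have := hU u₀ (hWU hu₀) i
      have hmono : (C.ncard : ℝ) ≤
          (({v | (restrict G U).Reachable u₀ v} ∩ P i).ncard : ℝ) := by
        exact_mod_cast Set.ncard_le_ncard hsub (Set.toFinite _)
      calc (C.ncard : ℝ) ≤ _ := hmono
        _ ≤ ((P i).ncard : ℝ) / 2 := this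
    have hbC : α * (C.ncard : ℝ) ≤ ((bdry GP C).ncard : ℝ) :=
      hexp i C (hCW.trans hWP) hCsmall
    -- induction on W \ C
    have hCne : C.Nonempty := ⟨u₀, hu₀C⟩
    have hWfin : W.Finite := Set.toFinite _
    have hcard : (W \ C).ncard = W.ncard - C.ncard := Set.ncard_diff hCW (Set.toFinite _)
    have hle : C.ncard ≤ W.ncard := Set.ncard_le_ncard hCW hWfin
    have hCpos : 0 < C.ncard := (Set.ncard_pos (Set.toFinite _)).mpr hCne
    have hlt : (W \ C).ncard < n := by omega
    have hbD : α * ((W \ C).ncard : ℝ) ≤ ((bdry GP (W \ C)).ncard : ℝ) :=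
      ih _ hlt (W \ C) rfl (fun v hv => hWU hv.1) (fun v hv => hWP hv.1)
    -- boundary inclusions
    have mem_of : ∀ (e : Sym2 V) (u v : V), e ∈ GP.edgeSet → u ∈ e → v ∈ e → u ≠ v →
        GP.Adj u v := by
      intro e u v he hue hve huv
      have : e = s(u, v) := (Sym2.mem_and_mem_iff huv).mp ⟨hue, hve⟩
      rw [this] at he
      exact he
    have hsubC : bdry GP C ⊆ bdry GP W := by
      rintro e ⟨he, ⟨u, hue, huC⟩, ⟨v, hve, hvC⟩⟩
      refine ⟨he, ⟨u, hue, hCW huC⟩, ⟨v, hve, ?_⟩⟩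
      intro hvW
      exact hvC (hclosed u huC v hvW (mem_of e u v he hue hve (fun h => hvC (h ▸ huC))))
    have hsubD : bdry GP (W \ C) ⊆ bdry GP W := by
      rintro e ⟨he, ⟨u, hue, huD⟩, ⟨v, hve, hvD⟩⟩
      refine ⟨he, ⟨u, hue, huD.1⟩, ⟨v, hve, ?_⟩⟩
      intro hvW
      have hvC : v ∈ C := by
        by_contra hvC
        exact hvD ⟨hvW, hvC⟩
      have huv : v ≠ u := fun h => huD.2 (h ▸ hvC)
      exact huD.2 (hclosed v hvC u huD.1 (mem_of e v u he hve hue huv))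
    have hdisj : Disjoint (bdry GP C) (bdry GP (W \ C)) := by
      rw [Set.disjoint_left]
      rintro e ⟨he, ⟨u, hue, huC⟩, _⟩ ⟨_, ⟨u', hue', huD⟩, _⟩
      have huu' : u ≠ u' := fun h => huD.2 (h ▸ huC)
      exact huD.2 (hclosed u huC u' huD.1 (mem_of e u u' he hue hue' huu'))
    have hunion : (bdry GP C).ncard + (bdry GP (W \ C)).ncard ≤ (bdry GP W).ncard := by
      rw [← Set.ncard_union_eq hdisj (Set.toFinite _) (Set.toFinite _)]
      exact Set.ncard_le_ncard (Set.union_subset hsubC hsubD) (Set.toFinite _)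
    have hw : (W.ncard : ℝ) = (C.ncard : ℝ) + ((W \ C).ncard : ℝ) := by
      exact_mod_cast (by omega : W.ncard = C.ncard + (W \ C).ncard)
    calc α * (W.ncard : ℝ) = α * (C.ncard : ℝ) + α * ((W \ C).ncard : ℝ) := by
          rw [hw]; ring
      _ ≤ ((bdry GP C).ncard : ℝ) + ((bdry GP (W \ C)).ncard : ℝ) := by
          exact add_le_add hbC hbD
      _ ≤ ((bdry GP W).ncard : ℝ) := by exact_mod_cast hunion

/-- sparse sets have the partition expansion property. -/
theorem statement2 [Fintype V] (G : SimpleGraph V) {ℓ : ℕ} (P : Fin ℓ → Set V)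
    (hP : IsPartition P) (α : ℝ) (hα : 0 < α) (hexp : PartExpansion G P α)
    (U : Set V) (hU : Sparse G P U) (i : Fin ℓ) :
    α * ((U ∩ P i).ncard : ℝ) ≤ ((bdry (restrict G (P i)) (U ∩ P i)).ncard : ℝ) := by
  exact key G P α hα hexp U hU i _ (U ∩ P i) rfl Set.inter_subset_left
    Set.inter_subset_right

end Paper

end
end

section
/- Let G=(V,E) be a finite simple graph on n ≥ 1 vertices, let q ≥ 2 be an integer, let P_1,…,P_ℓ be a partition of V and α > 0 such that for every i and every S ⊆ P_i with |S| ≤ |P_i|/2 one has |∂_{G[P_i]}(S)| ≥ α|S|, and suppose |P_i| ≥ ηn for every i, where η > 0. Then for every β ≥ 4·log(e·q)/(αη): e^{−e^{−n}} ≤ Z*_G(β)/Z_G(β) ≤ 1; in particular Z*_G(β) is a relative e^{−n}-approximation of Z_G(β). -/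
open Classical

noncomputable section

namespace Paper

variable {V : Type*}

section AuxStatement5

variable [Fintype V] [DecidableEq V]

lemma restrict_le (G : SimpleGraph V) (Pi : Set V) : restrict G Pi ≤ G :=
  fun _ _ h => h.1

lemma mG_le_card (G : SimpleGraph V) {q : ℕ} (ω : V → Fin q) :
    mG G ω ≤ G.edgeSet.ncard :=
  Set.ncard_le_ncard (fun _ he => he.1) G.edgeSet.toFinite

lemma mG_const (G : SimpleGraph V) {q : ℕ} (c : Fin q) :
    mG G (fun _ => c) = G.edgeSet.ncard := by
  unfold mG monoCount
  congr 1
  ext e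
  simp [Mono]

/-- If some part has no strict-majority colour, then the number of
non-monochromatic edges is at least α·|P i|/2. -/
lemma bad_nonmono (G : SimpleGraph V) {ℓ q : ℕ} (P : Fin ℓ → Set V)
    (α : ℝ) (hα : 0 < α) (hexp : PartExpansion G P α) (ω : V → Fin q) (i : Fin ℓ)
    (hbad : ∀ c : Fin q, (((P i ∩ {v | ω v = c}).ncard : ℝ)) ≤ ((P i).ncard : ℝ) / 2) :
    (mG G ω : ℝ) + α * ((P i).ncard : ℝ) / 2 ≤ (G.edgeSet.ncard : ℝ) := by
  classical
  set Pi := P i with hPi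
  set S : Fin q → Set V := fun c => Pi ∩ {v | ω v = c} with hS
  set N : Set (Sym2 V) := {e | e ∈ (restrict G Pi).edgeSet ∧ ¬ Mono ω e} with hN
  -- each boundary is contained in N
  have hBN : ∀ c, bdry (restrict G Pi) (S c) ⊆ N := by
    intro c e he
    obtain ⟨heE, ⟨u, hue, huS⟩, ⟨v, hve, hvS⟩⟩ := he
    refine ⟨heE, fun hm => hvS ?_⟩
    have hvPi : v ∈ Pi := by
      induction e using Sym2.ind with
      | _ a b =>
        rw [SimpleGraph.mem_edgeSet] at heE
        rcases Sym2.mem_iff.mp hve with rfl | rfl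
        · exact heE.2.1
        · exact heE.2.2
    exact ⟨hvPi, (hm v hve u hue).trans huS.2⟩
  -- each edge lies in at most two boundaries
  have hmul : ∀ e ∈ N,
      (Finset.univ.filter (fun c : Fin q => e ∈ bdry (restrict G Pi) (S c))).card ≤ 2 := by
    intro e _
    induction e using Sym2.ind with
    | _ a b =>
      have hsub : Finset.univ.filter
          (fun c : Fin q => s(a, b) ∈ bdry (restrict G Pi) (S c)) ⊆ {ω a, ω b} := by
        intro c hc
        rw [Finset.mem_filter] at hc
        obtain ⟨-, ⟨u, hue, huS⟩, -⟩ := hc.2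
        rcases Sym2.mem_iff.mp hue with rfl | rfl
        · rw [← huS.2]
          exact Finset.mem_insert_self _ _
        · rw [← huS.2]
          exact Finset.mem_insert_of_mem (Finset.mem_singleton_self _)
      exact le_trans (Finset.card_le_card hsub)
        (le_trans (Finset.card_insert_le (ω a) {ω b}) (by simp))
  -- double counting
  have hsum : ∑ c : Fin q, (bdry (restrict G Pi) (S c)).ncard ≤ 2 * N.ncard := by
    have h1 : ∀ c : Fin q, (bdry (restrict G Pi) (S c)).ncard
        = (N.toFinset.filter (fun e => e ∈ bdry (restrict G Pi) (S c))).card := by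
      intro c
      rw [Set.ncard_eq_toFinset_card']
      congr 1
      ext e
      simp only [Set.mem_toFinset, Finset.mem_filter]
      exact ⟨fun h => ⟨hBN c h, h⟩, fun h => h.2⟩
    calc ∑ c : Fin q, (bdry (restrict G Pi) (S c)).ncard
        = ∑ c : Fin q, ∑ e ∈ N.toFinset,
            (if e ∈ bdry (restrict G Pi) (S c) then 1 else 0) := by
          refine Finset.sum_congr rfl fun c _ => ?_
          rw [h1 c, Finset.card_filter]
      _ = ∑ e ∈ N.toFinset, ∑ c : Fin q,
            (if e ∈ bdry (restrict G Pi) (S c) then 1 else 0) := Finset.sum_comm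
      _ ≤ ∑ _e ∈ N.toFinset, 2 := by
          refine Finset.sum_le_sum fun e he => ?_
          rw [← Finset.card_filter]
          exact hmul e (Set.mem_toFinset.mp he)
      _ = 2 * N.ncard := by
          rw [Finset.sum_const, Set.ncard_eq_toFinset_card', smul_eq_mul, mul_comm]
  -- the colour classes partition P i
  have hpart : Pi.ncard = ∑ c : Fin q, (S c).ncard := by
    rw [Set.ncard_eq_toFinset_card',
      Finset.card_eq_sum_card_fiberwise (f := ω) (t := Finset.univ)
        (fun v _ => Finset.mem_univ _)]
    refine Finset.sum_congr rfl fun c _ => ?_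
    rw [Set.ncard_eq_toFinset_card']
    congr 1
    ext v
    simp [hS]
  -- expansion on each colour class
  have hexpc : ∀ c : Fin q, α * ((S c).ncard : ℝ) ≤ ((bdry (restrict G Pi) (S c)).ncard : ℝ) :=
    fun c => hexp i (S c) Set.inter_subset_left (hbad c)
  have hmain : α * (Pi.ncard : ℝ) ≤ 2 * (N.ncard : ℝ) := by
    have h2 : α * (Pi.ncard : ℝ) = ∑ c : Fin q, α * ((S c).ncard : ℝ) := by
      rw [← Finset.mul_sum, hpart]
      push_cast
      ring
    rw [h2]
    calc ∑ c : Fin q, α * ((S c).ncard : ℝ)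
        ≤ ∑ c : Fin q, ((bdry (restrict G Pi) (S c)).ncard : ℝ) :=
          Finset.sum_le_sum fun c _ => hexpc c
      _ = ((∑ c : Fin q, (bdry (restrict G Pi) (S c)).ncard : ℕ) : ℝ) := by push_cast; rfl
      _ ≤ 2 * (N.ncard : ℝ) := by exact_mod_cast hsum
  -- mono edges and N are disjoint subsets of the edge set
  have hNsub : N ⊆ G.edgeSet := fun e he => SimpleGraph.edgeSet_mono (restrict_le G Pi) he.1
  have hMN : mG G ω + N.ncard ≤ G.edgeSet.ncard := by
    have hdisj : Disjoint {e ∈ G.edgeSet | Mono ω e} N := by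
      rw [Set.disjoint_left]
      intro e heM heN
      exact heN.2 heM.2
    have : ({e ∈ G.edgeSet | Mono ω e} ∪ N).ncard ≤ G.edgeSet.ncard :=
      Set.ncard_le_ncard (Set.union_subset (fun e he => he.1) hNsub) G.edgeSet.toFinite
    rw [Set.ncard_union_eq hdisj (Set.toFinite _) (Set.toFinite _)] at this
    exact this
  have hMN' : (mG G ω : ℝ) + (N.ncard : ℝ) ≤ (G.edgeSet.ncard : ℝ) := by exact_mod_cast hMN
  linarith

/-- A state not close to any ground state has a part with no strict majority. -/
lemma bad_part {ℓ q : ℕ} (P : Fin ℓ → Set V) (hP : IsPartition P) (ω : V → Fin q)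
    (hbad : ¬ ∃ ψ : V → Fin q, GroundState P ψ ∧ CloseTo P ω ψ) :
    ∃ i, ∀ c : Fin q, ((P i ∩ {v | ω v = c}).ncard : ℝ) ≤ ((P i).ncard : ℝ) / 2 := by
  by_contra hcon
  push_neg at hcon
  choose c hc using hcon
  have hmem : ∀ v : V, ∃ i, v ∈ P i := by
    intro v
    have hv : v ∈ ⋃ i, P i := hP.2 ▸ Set.mem_univ v
    exact Set.mem_iUnion.mp hv
  choose idx hidx using hmem
  have huniq : ∀ v i, v ∈ P i → idx v = i := by
    intro v i hv
    by_contra hne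
    exact (Set.disjoint_left.mp (hP.1 _ _ hne) (hidx v)) hv
  refine hbad ⟨fun v => c (idx v), ?_, ?_⟩
  · intro i u hu v hv
    simp only [huniq u i hu, huniq v i hv]
  · intro i
    refine lt_of_lt_of_le (hc i) ?_
    have hsub : P i ∩ {v | ω v = c i} ⊆ P i ∩ {v | ω v = c (idx v)} := by
      rintro v ⟨hvP, hvc⟩
      exact ⟨hvP, by rw [Set.mem_setOf_eq, huniq v i hvP]; exact hvc⟩
    exact_mod_cast Set.ncard_le_ncard hsub (Set.toFinite _)

end AuxStatement5

/-- for β ≥ 4·log(e·q)/(αη), e^{−e^{−n}} ≤ Z*/Z ≤ 1; in particular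
Z* is a relative e^{−n}-approximation of Z. -/
theorem statement5 [Fintype V] [DecidableEq V] [Nonempty V] (G : SimpleGraph V) {ℓ : ℕ}
    (P : Fin ℓ → Set V) (hP : IsPartition P) (q : ℕ) (hq : 2 ≤ q)
    (α : ℝ) (hα : 0 < α) (hexp : PartExpansion G P α)
    (η : ℝ) (hη : 0 < η) (hsize : ∀ i, η * (Fintype.card V : ℝ) ≤ ((P i).ncard : ℝ))
    (β : ℝ) (hβ : 4 * Real.log (Real.exp 1 * (q : ℝ)) / (α * η) ≤ β) :
    (Real.exp (-Real.exp (-(Fintype.card V : ℝ))) ≤ Zstar G P q β / Z G q β ∧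
        Zstar G P q β / Z G q β ≤ 1) ∧
      (Real.exp (-Real.exp (-(Fintype.card V : ℝ))) ≤ Z G q β / Zstar G P q β ∧
        Z G q β / Zstar G P q β ≤ Real.exp (Real.exp (-(Fintype.card V : ℝ)))) := by
  classical
  set n : ℝ := (Fintype.card V : ℝ) with hn
  have hn1 : (1 : ℝ) ≤ n := by
    have : 0 < Fintype.card V := Fintype.card_pos
    rw [hn]; exact_mod_cast this
  have hq0 : 0 < q := by omega
  have hq1 : (1 : ℝ) ≤ (q : ℝ) := by exact_mod_cast le_trans (by norm_num) hq
  have hqR : (0 : ℝ) < (q : ℝ) := by linarith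
  have hL : Real.log (Real.exp 1 * (q : ℝ)) = 1 + Real.log q := by
    rw [Real.log_mul (Real.exp_ne_zero 1) (ne_of_gt hqR), Real.log_exp]
  have hlogq : 0 ≤ Real.log q := Real.log_nonneg hq1
  have hβpos : 0 < β := by
    refine lt_of_lt_of_le ?_ hβ
    rw [hL]
    positivity
  have hβαη : 4 * (1 + Real.log q) ≤ β * (α * η) := by
    rw [← hL]
    rw [div_le_iff₀ (by positivity)] at hβ
    linarith
  set E : ℝ := (G.edgeSet.ncard : ℝ) with hE
  set ω0 : V → Fin q := fun _ => (⟨0, hq0⟩ : Fin q) with hω0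
  -- Z* is at least the weight of the constant state
  have hterm_nonneg : ∀ ω : V → Fin q,
      0 ≤ (if ∃ ψ : V → Fin q, GroundState P ψ ∧ CloseTo P ω ψ
        then Real.exp (β * (mG G ω : ℝ)) else 0) := by
    intro ω; split_ifs
    · exact (Real.exp_pos _).le
    · exact le_refl 0
  have hgood : ∃ ψ : V → Fin q, GroundState P ψ ∧ CloseTo P ω0 ψ := by
    refine ⟨ω0, fun i u _ v _ => rfl, fun i => ?_⟩
    have hpos : (0 : ℝ) < ((P i).ncard : ℝ) := lt_of_lt_of_le (by positivity) (hsize i)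
    have hset : P i ∩ {v | ω0 v = ω0 v} = P i := by
      ext v; simp
    rw [hset]
    linarith
  have hZstar_ge : Real.exp (β * E) ≤ Zstar G P q β := by
    unfold Zstar
    have h := Finset.single_le_sum (f := fun ω : V → Fin q =>
        (if ∃ ψ : V → Fin q, GroundState P ψ ∧ CloseTo P ω ψ
          then Real.exp (β * (mG G ω : ℝ)) else 0))
      (fun ω _ => hterm_nonneg ω) (Finset.mem_univ ω0)
    beta_reduce at h
    rw [if_pos hgood, mG_const G] at h
    exact h
  have hApos : 0 < Zstar G P q β := lt_of_lt_of_le (Real.exp_pos _) hZstar_ge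
  have hZZ : Zstar G P q β ≤ Z G q β := by
    unfold Zstar Z
    refine Finset.sum_le_sum fun ω _ => ?_
    split_ifs
    · exact le_refl _
    · exact (Real.exp_pos _).le
  have hZpos : 0 < Z G q β := lt_of_lt_of_le hApos hZZ
  -- the bad states
  have hdiff : Z G q β - Zstar G P q β = ∑ ω : V → Fin q,
      (if ∃ ψ : V → Fin q, GroundState P ψ ∧ CloseTo P ω ψ then 0
        else Real.exp (β * (mG G ω : ℝ))) := by
    unfold Z Zstar
    rw [← Finset.sum_sub_distrib]
    refine Finset.sum_congr rfl fun ω _ => ?_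
    split_ifs <;> ring
  have hterm : ∀ ω : V → Fin q,
      (if ∃ ψ : V → Fin q, GroundState P ψ ∧ CloseTo P ω ψ then (0 : ℝ)
        else Real.exp (β * (mG G ω : ℝ)))
      ≤ Real.exp (β * E - β * (α * η * n / 2)) := by
    intro ω
    split_ifs with h
    · exact (Real.exp_pos _).le
    · apply Real.exp_le_exp.mpr
      obtain ⟨i, hi⟩ := bad_part P hP ω h
      have h1 := bad_nonmono G P α hα hexp ω i hi
      have h2 : α * (η * n) ≤ α * ((P i).ncard : ℝ) :=
        mul_le_mul_of_nonneg_left (hsize i) hα.le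
      have h3 : (mG G ω : ℝ) ≤ E - α * η * n / 2 := by
        rw [hE]; linarith
      have h4 := mul_le_mul_of_nonneg_left h3 hβpos.le
      linarith
  have hcount : (Fintype.card (V → Fin q) : ℝ) = Real.exp (n * Real.log q) := by
    rw [Fintype.card_fun, Fintype.card_fin, Real.exp_nat_mul, Real.exp_log hqR]
    push_cast
    ring
  have hbadsum : Z G q β - Zstar G P q β ≤ Real.exp (β * E - n) := by
    rw [hdiff]
    calc (∑ ω : V → Fin q,
          (if ∃ ψ : V → Fin q, GroundState P ψ ∧ CloseTo P ω ψ then (0 : ℝ)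
            else Real.exp (β * (mG G ω : ℝ))))
        ≤ ∑ _ω : V → Fin q, Real.exp (β * E - β * (α * η * n / 2)) :=
          Finset.sum_le_sum fun ω _ => hterm ω
      _ = (Fintype.card (V → Fin q) : ℝ) * Real.exp (β * E - β * (α * η * n / 2)) := by
          rw [Finset.sum_const, Finset.card_univ, nsmul_eq_mul]
      _ = Real.exp (n * Real.log q + (β * E - β * (α * η * n / 2))) := by
          rw [hcount, ← Real.exp_add]
      _ ≤ Real.exp (β * E - n) := by
          apply Real.exp_le_exp.mpr
          have h5 : 4 * (1 + Real.log q) * (n / 2) ≤ β * (α * η) * (n / 2) :=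
            mul_le_mul_of_nonneg_right hβαη (by linarith)
          nlinarith [mul_nonneg hlogq (by linarith : (0:ℝ) ≤ n)]
  -- final assembly
  set x : ℝ := Real.exp (-n) with hx
  have hxpos : 0 < x := Real.exp_pos _
  have h1x : 1 + x ≤ Real.exp x := by linarith [Real.add_one_le_exp x]
  have hZle : Z G q β ≤ Real.exp x * Zstar G P q β := by
    have e1 : Real.exp (β * E - n) = x * Real.exp (β * E) := by
      rw [hx, ← Real.exp_add]; ring_nf
    have e2 : x * Real.exp (β * E) ≤ x * Zstar G P q β :=
      mul_le_mul_of_nonneg_left hZstar_ge hxpos.le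
    have e3 : Zstar G P q β + x * Zstar G P q β ≤ Real.exp x * Zstar G P q β := by
      nlinarith
    rw [e1] at hbadsum
    linarith
  refine ⟨⟨?_, ?_⟩, ?_, ?_⟩
  · -- exp(-x) ≤ Z*/Z
    rw [le_div_iff₀ hZpos]
    calc Real.exp (-x) * Z G q β
        ≤ Real.exp (-x) * (Real.exp x * Zstar G P q β) :=
          mul_le_mul_of_nonneg_left hZle (Real.exp_pos _).le
      _ = Zstar G P q β := by rw [← mul_assoc, ← Real.exp_add]; simp
  · exact (div_le_one hZpos).mpr hZZ
  · -- exp(-x) ≤ Z/Z*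
    refine le_trans (Real.exp_le_one_iff.mpr (by linarith)) ?_
    exact (one_le_div hApos).mpr hZZ
  · exact (div_le_iff₀ hApos).mpr hZle

end Paper

end
end
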